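/- Let q ≥ 1 and let D be a PoSW database containing no (q+1)-chain. Let T ⊆ V_n satisfy: rt ∈ T; if v ∈ T and v ≠ rt then par(v) ∈ T; and for every non-leaf v ∈ T, either both of left(v), right(v) lie in T or neither does. Suppose there is a labeling ℓ : T → {0,1}^w with ℓ(v) = D(v, ℓ_{in(v)}) (in particular D(v, ℓ_{in(v)}) ≠ ⊥) for every v ∈ T with in(v) ⊆ T. Then the number of leaves of T, i.e. |{v ∈ T : |v| = n}|, satisfies 2·|{v ∈ T : |v| = n}| ≤ q + 2. -/

import Mathlib

/- Vertices of the Simple PoSW DAG are binary strings (lists of booleans) of length ≤ n.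
The root `rt` is the empty string. -/

/-- left child -/
def left (v : List Bool) : List Bool := v ++ [false]
/-- right child -/
def right (v : List Bool) : List Bool := v ++ [true]
/-- parent -/
def par (v : List Bool) : List Bool := v.dropLast
/-- sibling -/
def sib (v : List Bool) : List Bool := v.dropLast ++ [!v.getLast!]
/-- ancestors: `{par^[i] v : 0 ≤ i ≤ |v|}` -/
def anc (v : List Bool) : Set (List Bool) := {u | ∃ i ≤ v.length, u = par^[i] v}

/-- the inward neighborhood `in(v)` of `v` in the Simple PoSW DAG `G_n` -/
def inSet (n : ℕ) (v : List Bool) : Set (List Bool) :=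
  {u | (v.length < n ∧ (u = left v ∨ u = right v)) ∨
       ∃ z ∈ anc v, z ≠ [] ∧ z = right (par z) ∧ u = sib z}

/-- an input: a vertex `v ∈ V_n` together with a tuple of `w`-bit labels indexed by `in(v)` -/
structure PInput (n w : ℕ) where
  v : List Bool
  hv : v.length ≤ n
  lab : {u : List Bool // u ∈ inSet n v} → (Fin w → Bool)

/-- `D` has no collisions (beyond `⊥`) -/
def NoCollision {n w : ℕ} (D : PInput n w → Option (Fin w → Bool)) : Prop :=
  ∀ ξ ξ' : PInput n w, ξ ≠ ξ' → D ξ = D ξ' → D ξ = none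

/-- `ℓ(z) = D(z, ℓ_{in(z)})`, i.e. the labeling `ℓ` is consistent with `D` at the vertex `z`
(in particular the value is ≠ ⊥). -/
def consistentAt {n w : ℕ} (D : PInput n w → Option (Fin w → Bool))
    (ℓ : List Bool → Fin w → Bool) (z : List Bool) : Prop :=
  ∃ hz : z.length ≤ n, D ⟨z, hz, fun u => ℓ u.1⟩ = some (ℓ z)

/-- `D` contains an `r`-chain: inputs `ξ_0, …, ξ_r` such that for `1 ≤ i ≤ r`,
`D ξ_{i-1} ≠ ⊥` and `D ξ_{i-1}` occurs as a component of the label tuple of `ξ_i`. -/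
def HasChain {n w : ℕ} (D : PInput n w → Option (Fin w → Bool)) (r : ℕ) : Prop :=
  ∃ ξ : Fin (r + 1) → PInput n w, ∀ i : Fin r,
    ∃ y : Fin w → Bool, D (ξ i.castSucc) = some y ∧ ∃ uu, (ξ i.succ).lab uu = y

private lemma getLast!_concat' (l : List Bool) (a : Bool) : (l ++ [a]).getLast! = a :=
  List.getLast!_of_getLast? List.getLast?_concat

private lemma prefix_of_proper {z l : List Bool} {a : Bool}
    (h : z <+: l ++ [a]) (hne : z ≠ l ++ [a]) : z <+: l := by
  obtain ⟨t, ht⟩ := h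
  rcases t.eq_nil_or_concat with rfl | ⟨t', b, rfl⟩
  · simp at ht; exact absurd ht hne
  · refine ⟨t', ?_⟩
    have h2 : (z ++ t' ++ [b]).dropLast = (l ++ [a]).dropLast := by
      rw [List.concat_eq_append, ← List.append_assoc] at ht; rw [ht]
    simpa [List.dropLast_concat] using h2

private lemma mem_T_of_prefix {T : Set (List Bool)}
    (hpar : ∀ v ∈ T, v ≠ [] → par v ∈ T) :
    ∀ v ∈ T, ∀ z, z <+: v → z ∈ T := by
  intro v
  induction v using List.reverseRecOn with
  | nil => intro hv z hz; rwa [List.prefix_nil.mp hz]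
  | append_singleton l a ih =>
      intro hv z hz
      by_cases hzeq : z = l ++ [a]
      · rwa [hzeq]
      · have hl : l ∈ T := by
          have := hpar _ hv (by simp)
          simpa [par, List.dropLast_concat] using this
        exact ih hl z (prefix_of_proper hz hzeq)

private lemma par_iterate_prefix (z : List Bool) (i : ℕ) : par^[i] z <+: z := by
  induction i with
  | zero => simp
  | succ i ih =>
      rw [Function.iterate_succ_apply']
      exact (List.dropLast_prefix _).trans ih

private lemma mem_anc_of_prefix : ∀ {v z : List Bool}, z <+: v → z ∈ anc v := by
  intro v
  induction v using List.reverseRecOn with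
  | nil =>
      intro z hz
      exact ⟨0, by simp, by simpa using (List.prefix_nil.mp hz)⟩
  | append_singleton l a ih =>
      intro z hz
      by_cases hzeq : z = l ++ [a]
      · exact ⟨0, by simp, by simp [hzeq]⟩
      · obtain ⟨i, hi, hzi⟩ := ih (prefix_of_proper hz hzeq)
        refine ⟨i + 1, by simp; omega, ?_⟩
        rw [Function.iterate_succ_apply]
        have hpe : par (l ++ [a]) = l := by simp [par, List.dropLast_concat]
        rw [hpe]; exact hzi

private lemma inSet_subset {n : ℕ} {T : Set (List Bool)}
    (hpar : ∀ v ∈ T, v ≠ [] → par v ∈ T)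
    (hsib : ∀ v ∈ T, v.length < n → (left v ∈ T ↔ right v ∈ T))
    {z v : List Bool} (hv : v ∈ T) (hlen : v.length = n) (hzv : z <+: v) :
    inSet n z ⊆ T := by
  intro u hu
  have hzT : z ∈ T := mem_T_of_prefix hpar v hv z hzv
  rcases hu with ⟨hzn, hu⟩ | ⟨y, hy, hyne, hyr, hu⟩
  · obtain ⟨t, ht⟩ := hzv
    have htne : t ≠ [] := by
      intro h; subst h
      simp at ht; subst ht; omega
    obtain ⟨b, t', rfl⟩ : ∃ b t', t = b :: t' := by
      cases t with
      | nil => exact absurd rfl htne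
      | cons b t' => exact ⟨b, t', rfl⟩
    have hchild : z ++ [b] ∈ T := by
      refine mem_T_of_prefix hpar v hv _ ⟨t', ?_⟩
      rw [← ht]; simp
    have hboth := hsib z hzT hzn
    have hl : left z ∈ T ∧ right z ∈ T := by
      cases b
      · exact ⟨hchild, hboth.mp hchild⟩
      · exact ⟨hboth.mpr hchild, hchild⟩
    rcases hu with rfl | rfl
    · exact hl.1
    · exact hl.2
  · have hyz : y <+: z := by
      obtain ⟨i, hi, rfl⟩ := hy
      exact par_iterate_prefix z i
    have hyT : y ∈ T := mem_T_of_prefix hpar v hv y (hyz.trans hzv)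
    have hpyT : par y ∈ T := hpar y hyT hyne
    have hylen : y.length ≤ n := hlen ▸ (hyz.trans hzv).length_le
    have hyne' : 0 < y.length := List.length_pos_iff.mpr hyne
    have hpylen : (par y).length < n := by
      have : (par y).length = y.length - 1 := by simp [par, List.length_dropLast]
      omega
    have hrtT : right (par y) ∈ T := by rw [← hyr]; exact hyT
    have hltT : left (par y) ∈ T := (hsib (par y) hpyT hpylen).mpr hrtT
    have hsy : sib y = left (par y) := by
      have h1 : y.getLast! = true := by
        conv_lhs => rw [hyr]
        exact getLast!_concat' _ _
      simp only [sib, left, par, h1, Bool.not_true]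
    rw [hu, hsy]; exact hltT

private def Sset (n : ℕ) (T : Set (List Bool)) (z : List Bool) : Set (List Bool) :=
  {v | v ∈ T ∧ v.length = n ∧ z <+: v}

private lemma mem_Sset {n : ℕ} {T : Set (List Bool)} {z v : List Bool} :
    v ∈ Sset n T z ↔ v ∈ T ∧ v.length = n ∧ z <+: v := Iff.rfl

private lemma Sset_finite (n : ℕ) (T : Set (List Bool)) (z : List Bool) :
    (Sset n T z).Finite :=
  (List.finite_length_eq Bool n).subset (fun _ hv => hv.2.1)

private lemma key_path {n : ℕ} {T : Set (List Bool)}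
    (hpar : ∀ v ∈ T, v ≠ [] → par v ∈ T)
    (hsib : ∀ v ∈ T, v.length < n → (left v ∈ T ↔ right v ∈ T)) :
    ∀ m z, z.length + m = n → (Sset n T z).Nonempty →
    ∃ p : List (List Bool),
      List.Chain' (fun u v => u ∈ inSet n v) p ∧
      (∀ x ∈ p, x ∈ T ∧ inSet n x ⊆ T) ∧
      p.getLast? = some z ∧
      (∃ v0, p.head? = some v0 ∧ v0 ∈ Sset n T z) ∧
      2 * (Sset n T z).ncard ≤ p.length + 1 := by
  intro m
  induction m with
  | zero =>
      intro z hzl hne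
      obtain ⟨v, hvT, hvl, hzv⟩ := hne
      have hzv' : z = v := hzv.eq_of_length (by omega)
      subst hzv'
      have hSz : Sset n T z = {z} := by
        ext u
        simp only [mem_Sset, Set.mem_singleton_iff]
        constructor
        · rintro ⟨-, hul, hzu⟩
          exact (hzu.eq_of_length (by omega)).symm
        · rintro rfl; exact ⟨hvT, hvl, List.prefix_refl _⟩
      refine ⟨[z], List.isChain_singleton _, ?_, rfl,
        ⟨z, rfl, hvT, hvl, List.prefix_refl _⟩, ?_⟩
      · rintro x hx
        simp only [List.mem_singleton] at hx; subst hx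
        exact ⟨hvT, inSet_subset hpar hsib hvT hvl (List.prefix_refl _)⟩
      · rw [hSz, Set.ncard_singleton]; simp
  | succ m ih =>
      intro z hzl hne
      have hzn : z.length < n := by omega
      have hsplit : Sset n T z = Sset n T (z ++ [false]) ∪ Sset n T (z ++ [true]) := by
        ext v
        simp only [mem_Sset, Set.mem_union]
        constructor
        · rintro ⟨hvT, hvl, t, ht⟩
          have htne : t ≠ [] := by
            rintro rfl
            rw [List.append_nil] at ht
            subst ht; omega
          obtain ⟨b, t', rfl⟩ : ∃ b t', t = b :: t' := by
            cases t with
            | nil => exact absurd rfl htne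
            | cons b t' => exact ⟨b, t', rfl⟩
          cases b
          · exact Or.inl ⟨hvT, hvl, ⟨t', by rw [← ht]; simp⟩⟩
          · exact Or.inr ⟨hvT, hvl, ⟨t', by rw [← ht]; simp⟩⟩
        · rintro (⟨hvT, hvl, hp⟩ | ⟨hvT, hvl, hp⟩)
          · exact ⟨hvT, hvl, ((List.prefix_append z [false]).trans hp)⟩
          · exact ⟨hvT, hvl, ((List.prefix_append z [true]).trans hp)⟩
      have hdisj : Disjoint (Sset n T (z ++ [false])) (Sset n T (z ++ [true])) := by
        rw [Set.disjoint_left]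
        rintro v ⟨-, -, h0⟩ ⟨-, -, h1⟩
        have e0 := List.prefix_iff_eq_take.mp h0
        have e1 := List.prefix_iff_eq_take.mp h1
        have : z ++ [false] = z ++ [true] := by
          rw [e0, e1]; simp
        simp at this
      have hcard : (Sset n T z).ncard
          = (Sset n T (z ++ [false])).ncard + (Sset n T (z ++ [true])).ncard := by
        rw [hsplit, Set.ncard_union_eq hdisj (Sset_finite _ _ _) (Sset_finite _ _ _)]
      have hlen0 : (z ++ [false]).length + m = n := by simp; omega
      have hlen1 : (z ++ [true]).length + m = n := by simp; omega
      -- z is good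
      obtain ⟨vz, hvzT, hvzl, hvzp⟩ := hne
      have hgz : z ∈ T ∧ inSet n z ⊆ T :=
        ⟨mem_T_of_prefix hpar vz hvzT z hvzp, inSet_subset hpar hsib hvzT hvzl hvzp⟩
      by_cases h0 : (Sset n T (z ++ [false])).Nonempty
      · by_cases h1 : (Sset n T (z ++ [true])).Nonempty
        · -- both children
          obtain ⟨p0, hc0, hg0, hl0, ⟨v0, hh0, hv0⟩, hn0⟩ := ih (z ++ [false]) hlen0 h0
          obtain ⟨p1, hc1, hg1, hl1, ⟨v1, hh1, hv1⟩, hn1⟩ := ih (z ++ [true]) hlen1 h1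
          obtain ⟨t0, rfl⟩ : ∃ t, p0 = v0 :: t := by
            cases p0 with
            | nil => simp at hh0
            | cons a t =>
                simp only [List.head?_cons, Option.some_inj] at hh0
                exact ⟨t, by rw [hh0]⟩
          obtain ⟨t1, rfl⟩ : ∃ t, p1 = v1 :: t := by
            cases p1 with
            | nil => simp at hh1
            | cons a t =>
                simp only [List.head?_cons, Option.some_inj] at hh1
                exact ⟨t, by rw [hh1]⟩
          have hedge1z : (z ++ [true]) ∈ inSet n z := Or.inl ⟨hzn, Or.inr rfl⟩
          have hedge01 : (z ++ [false]) ∈ inSet n v1 := by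
            refine Or.inr ⟨z ++ [true], mem_anc_of_prefix hv1.2.2, by simp, ?_, ?_⟩
            · show z ++ [true] = right (par (z ++ [true]))
              simp [right, par, List.dropLast_concat]
            · show z ++ [false] = sib (z ++ [true])
              simp [sib, par, List.dropLast_concat, getLast!_concat']
          refine ⟨(v0 :: t0) ++ ((v1 :: t1) ++ [z]), ?_, ?_, ?_, ⟨v0, rfl, ?_⟩, ?_⟩
          · refine hc0.append (hc1.append (List.isChain_singleton z) ?_) ?_
            · intro x hx y hy
              rw [hl1] at hx
              simp only [Option.mem_def, Option.some_inj] at hx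
              simp only [List.head?_cons, Option.mem_def, Option.some_inj] at hy
              subst hx; subst hy
              exact hedge1z
            · intro x hx y hy
              rw [hl0] at hx
              simp only [Option.mem_def, Option.some_inj] at hx
              simp only [List.head?_cons, List.cons_append, Option.mem_def,
                Option.some_inj] at hy
              subst hx; subst hy
              exact hedge01
          · intro x hx
            simp only [List.mem_append, List.mem_singleton] at hx
            rcases hx with hx | hx | rfl
            · exact hg0 x hx
            · exact hg1 x hx
            · exact hgz
          · rw [← List.append_assoc]
            exact List.getLast?_concat
          · exact ⟨hv0.1, hv0.2.1, (List.prefix_append z [false]).trans hv0.2.2⟩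
          · have l0 := hn0; have l1 := hn1
            simp only [List.length_cons, List.length_append,
              List.length_singleton] at l0 l1 ⊢
            omega
        · -- only left child
          obtain ⟨p0, hc0, hg0, hl0, ⟨v0, hh0, hv0⟩, hn0⟩ := ih (z ++ [false]) hlen0 h0
          obtain ⟨t0, rfl⟩ : ∃ t, p0 = v0 :: t := by
            cases p0 with
            | nil => simp at hh0
            | cons a t =>
                simp only [List.head?_cons, Option.some_inj] at hh0
                exact ⟨t, by rw [hh0]⟩
          have hk1 : (Sset n T (z ++ [true])).ncard = 0 := by
            rw [Set.not_nonempty_iff_eq_empty] at h1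
            simp [h1]
          refine ⟨(v0 :: t0) ++ [z], ?_, ?_, List.getLast?_concat, ⟨v0, rfl, ?_⟩, ?_⟩
          · refine hc0.append (List.isChain_singleton z) ?_
            intro x hx y hy
            rw [hl0] at hx
            simp only [Option.mem_def, Option.some_inj] at hx
            simp only [List.head?_cons, Option.mem_def, Option.some_inj] at hy
            subst hx; subst hy
            exact Or.inl ⟨hzn, Or.inl rfl⟩
          · intro x hx
            simp only [List.mem_append, List.mem_singleton] at hx
            rcases hx with hx | rfl
            · exact hg0 x hx
            · exact hgz
          · exact ⟨hv0.1, hv0.2.1, (List.prefix_append z [false]).trans hv0.2.2⟩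
          · have l0 := hn0
            simp only [List.length_cons, List.length_append,
              List.length_singleton] at l0 ⊢
            omega
      · -- only right child
        have h1 : (Sset n T (z ++ [true])).Nonempty := by
          by_contra h1
          rw [Set.not_nonempty_iff_eq_empty] at h0 h1
          have hmem : vz ∈ Sset n T (z ++ [false]) ∪ Sset n T (z ++ [true]) :=
            hsplit ▸ (⟨hvzT, hvzl, hvzp⟩ : vz ∈ Sset n T z)
          rw [h0, h1] at hmem
          simp at hmem
        obtain ⟨p1, hc1, hg1, hl1, ⟨v1, hh1, hv1⟩, hn1⟩ := ih (z ++ [true]) hlen1 h1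
        obtain ⟨t1, rfl⟩ : ∃ t, p1 = v1 :: t := by
          cases p1 with
          | nil => simp at hh1
          | cons a t =>
              simp only [List.head?_cons, Option.some_inj] at hh1
              exact ⟨t, by rw [hh1]⟩
        have hk0 : (Sset n T (z ++ [false])).ncard = 0 := by
          rw [Set.not_nonempty_iff_eq_empty] at h0
          simp [h0]
        refine ⟨(v1 :: t1) ++ [z], ?_, ?_, List.getLast?_concat, ⟨v1, rfl, ?_⟩, ?_⟩
        · refine hc1.append (List.isChain_singleton z) ?_
          intro x hx y hy
          rw [hl1] at hx
          simp only [Option.mem_def, Option.some_inj] at hx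
          simp only [List.head?_cons, Option.mem_def, Option.some_inj] at hy
          subst hx; subst hy
          exact Or.inl ⟨hzn, Or.inr rfl⟩
        · intro x hx
          simp only [List.mem_append, List.mem_singleton] at hx
          rcases hx with hx | rfl
          · exact hg1 x hx
          · exact hgz
        · exact ⟨hv1.1, hv1.2.1, (List.prefix_append z [true]).trans hv1.2.2⟩
        · have l1 := hn1
          simp only [List.length_cons, List.length_append,
            List.length_singleton] at l1 ⊢
          omega
theorem stmt_19 {n w : ℕ} (hn : 1 ≤ n) (hw : 1 ≤ w) (q : ℕ) (hq : 1 ≤ q)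
    (D : PInput n w → Option (Fin w → Bool)) (hD : ¬HasChain D (q + 1))
    (T : Set (List Bool)) (hT : T ⊆ {v | v.length ≤ n})
    (hrt : [] ∈ T)
    (hpar : ∀ v ∈ T, v ≠ [] → par v ∈ T)
    (hsib : ∀ v ∈ T, v.length < n → (left v ∈ T ↔ right v ∈ T))
    (ℓ : List Bool → Fin w → Bool)
    (hℓ : ∀ v ∈ T, inSet n v ⊆ T → consistentAt D ℓ v) :
    2 * {v : List Bool | v ∈ T ∧ v.length = n}.ncard ≤ q + 2 := by
  classical
  by_contra hcon
  push_neg at hcon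
  have hSnil : {v : List Bool | v ∈ T ∧ v.length = n} = Sset n T [] := by
    ext v
    simp [Sset, List.nil_prefix, and_assoc]
  rw [hSnil] at hcon
  have hpos : (Sset n T []).Nonempty := by
    apply Set.nonempty_of_ncard_ne_zero; omega
  obtain ⟨p, hchain, hg, hlast, hhead, hlen⟩ :=
    key_path hpar hsib n [] (by simp) hpos
  have hplen : q + 2 ≤ p.length := by omega
  apply hD
  refine ⟨fun j => ⟨p.get ⟨j.1, by omega⟩,
    hT (hg _ (List.get_mem p ⟨j.1, by omega⟩)).1, fun u => ℓ u.1⟩, ?_⟩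
  intro i
  have hix : (i : ℕ) < p.length := by omega
  have hix1 : (i : ℕ) + 1 < p.length := by omega
  have hedge := List.IsChain.getElem hchain (i : ℕ) (by omega)
  have hgood := hg _ (List.get_mem p ⟨(i : ℕ), hix⟩)
  obtain ⟨hz', hcons⟩ := hℓ _ hgood.1 hgood.2
  refine ⟨ℓ (p.get ⟨(i : ℕ), hix⟩), ?_, ?_⟩
  · exact hcons
  · exact ⟨⟨p.get ⟨(i : ℕ), hix⟩, hedge⟩, rfl⟩
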